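/- For every positive integer k, the graph K_{k,2k+2}^p := the join of an empty graph on k vertices with the disjoint union of 2k - 1 isolated vertices and a path P_3 on 3 vertices, contains every tree on 2k + 3 vertices as a subgraph. -/

import Mathlib

open SimpleGraph Finset

/-- The signless Laplacian matrix `Q(G) = D(G) + A(G)` over `ℝ`. -/
def signlessLaplacian {V : Type*} [Fintype V] [DecidableEq V] (G : SimpleGraph V)
    [DecidableRel G.Adj] : Matrix V V ℝ :=
  SimpleGraph.degMatrix ℝ G + G.adjMatrix ℝ

/-- `q` is the largest eigenvalue of the real matrix `M`. -/
def IsMaxEigenvalue {V : Type*} [Fintype V] [DecidableEq V] (M : Matrix V V ℝ) (q : ℝ) : Prop :=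
  Module.End.HasEigenvalue (Matrix.toLin' M) q ∧
    ∀ μ : ℝ, Module.End.HasEigenvalue (Matrix.toLin' M) μ → μ ≤ q

/-- `S_{n,k}`: the join of `K_k` with an empty graph on `n - k` vertices. -/
def Snk (n k : ℕ) : SimpleGraph (Fin n) where
  Adj u v := u ≠ v ∧ (u.val < k ∨ v.val < k)
  symm := ⟨fun u v ⟨h1, h2⟩ => ⟨h1.symm, h2.symm⟩⟩
  loopless := ⟨fun u ⟨h, _⟩ => h rfl⟩

instance (n k : ℕ) : DecidableRel (Snk n k).Adj := fun u v =>
  inferInstanceAs (Decidable (u ≠ v ∧ (u.val < k ∨ v.val < k)))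

/-- `S_{n,k}^+`: `S_{n,k}` plus one edge inside the independent set (between
vertices `k` and `k+1`). -/
def SnkPlus (n k : ℕ) : SimpleGraph (Fin n) where
  Adj u v := u ≠ v ∧ (u.val < k ∨ v.val < k ∨ (u.val ≤ k + 1 ∧ v.val ≤ k + 1))
  symm := ⟨fun u v ⟨h1, h2⟩ => ⟨h1.symm, by tauto⟩⟩
  loopless := ⟨fun u ⟨h, _⟩ => h rfl⟩

instance (n k : ℕ) : DecidableRel (SnkPlus n k).Adj := fun u v =>
  inferInstanceAs (Decidable (u ≠ v ∧ (u.val < k ∨ v.val < k ∨ (u.val ≤ k + 1 ∧ v.val ≤ k + 1))))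

/-- `T` is contained in `G` as a subgraph: there is an injective graph homomorphism. -/
def ContainsSub {α β : Type*} (T : SimpleGraph α) (G : SimpleGraph β) : Prop :=
  ∃ f : T →g G, Function.Injective f

/-- The join `G ∨ H` of two graphs: all edges between the two vertex sets are added. -/
def graphJoin {α β : Type*} (G : SimpleGraph α) (H : SimpleGraph β) :
    SimpleGraph (α ⊕ β) where
  Adj u v := match u, v with
    | Sum.inl a, Sum.inl b => G.Adj a b
    | Sum.inr a, Sum.inr b => H.Adj a b
    | _, _ => True
  symm := ⟨by rintro (a | a) (b | b) h <;> first | exact h.symm | trivial⟩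
  loopless := by refine ⟨?_⟩; rintro (a | a) h
                 · exact G.irrefl h
                 · exact H.irrefl h

/-- `(2k-1)K_1 ∪ P_3` on `2k+2` vertices: a path on the last three vertices. -/
def pathThreeGraph (k : ℕ) : SimpleGraph (Fin (2 * k + 2)) where
  Adj a b := a ≠ b ∧
    ((a.val = 2 * k - 1 ∧ b.val = 2 * k) ∨ (a.val = 2 * k ∧ b.val = 2 * k - 1) ∨
     (a.val = 2 * k ∧ b.val = 2 * k + 1) ∨ (a.val = 2 * k + 1 ∧ b.val = 2 * k))
  symm := ⟨fun a b ⟨h1, h2⟩ => ⟨h1.symm, by tauto⟩⟩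
  loopless := ⟨fun a ⟨h, _⟩ => h rfl⟩

lemma tree_two_coloring {α : Type*} (T : SimpleGraph α) (hT : T.IsTree) [Nonempty α] :
    ∃ c : α → Bool, ∀ u v, T.Adj u v → c u ≠ c v := by
  classical
  obtain ⟨r⟩ := ‹Nonempty α›
  have hEU := hT.existsUnique_path r
  set P : ∀ v, T.Walk r v := fun v => (hEU v).choose with hP
  have hPpath : ∀ v, (P v).IsPath := fun v => (hEU v).choose_spec.1
  have hPuniq : ∀ v (q : T.Walk r v), q.IsPath → q = P v := fun v q hq =>
    ((hEU v).choose_spec.2 q hq)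
  refine ⟨fun v => decide ((P v).length % 2 = 1), ?_⟩
  intro u v huv
  have key : (P v).length = (P u).length + 1 ∨ (P u).length = (P v).length + 1 := by
    by_cases hv : v ∈ (P u).support
    · right
      have h1 : ((P u).takeUntil v hv).IsPath := (hPpath u).takeUntil hv
      have h2 : ((P u).dropUntil v hv).IsPath := (hPpath u).dropUntil hv
      have heq : (P u).takeUntil v hv = P v := hPuniq v _ h1
      have hsingle : (SimpleGraph.Walk.cons huv.symm SimpleGraph.Walk.nil : T.Walk v u).IsPath := by
        simp [SimpleGraph.Walk.isPath_def, huv.ne']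
      have := hT.IsAcyclic.path_unique ⟨(P u).dropUntil v hv, h2⟩
        ⟨SimpleGraph.Walk.cons huv.symm SimpleGraph.Walk.nil, hsingle⟩
      have hlen : ((P u).dropUntil v hv).length = 1 := by
        have h' : ((P u).dropUntil v hv) = SimpleGraph.Walk.cons huv.symm SimpleGraph.Walk.nil := by
          exact congrArg Subtype.val this
        simp [h']
      have hspec := SimpleGraph.Walk.take_spec (P u) hv
      have := congrArg SimpleGraph.Walk.length hspec
      rw [SimpleGraph.Walk.length_append, heq, hlen] at this
      omega
    · left
      have h1 : ((P u).concat huv).IsPath := by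
        rw [← SimpleGraph.Walk.isPath_reverse_iff, SimpleGraph.Walk.reverse_concat]
        rw [SimpleGraph.Walk.cons_isPath_iff]
        refine ⟨(hPpath u).reverse, by simpa using hv⟩
      have heq : (P u).concat huv = P v := hPuniq v _ h1
      have := congrArg SimpleGraph.Walk.length heq
      rw [SimpleGraph.Walk.length_concat] at this; omega
  simp only [ne_eq, decide_eq_decide]
  omega


lemma exists_small_degree {α : Type*} [Fintype α] [DecidableEq α] (T : SimpleGraph α)
    [DecidableRel T.Adj] (hT : T.IsTree) (k : ℕ) (hcard : Fintype.card α = 2 * k + 3)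
    (c : α → Bool) (hc : ∀ u v, T.Adj u v → c u ≠ c v)
    (hA : (univ.filter fun v => c v = true).card = k + 1) :
    ∃ a, c a = true ∧ T.degree a ≤ 2 := by
  by_contra hcon
  push_neg at hcon
  set A := univ.filter fun v => c v = true with hAdef
  have hdeg : ∀ a ∈ A, 3 ≤ T.degree a := by
    intro a ha
    rw [hAdef, mem_filter] at ha
    exact hcon a ha.2
  have hsum : 3 * (k + 1) ≤ ∑ a ∈ A, T.degree a := by
    calc 3 * (k+1) = ∑ _a ∈ A, 3 := by rw [Finset.sum_const, hA]; ring
    _ ≤ _ := Finset.sum_le_sum hdeg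
  have hsig : ∑ a ∈ A, T.degree a = (A.sigma fun a => T.neighborFinset a).card := by
    rw [Finset.card_sigma]
    rfl
  have hle : (A.sigma fun a => T.neighborFinset a).card ≤ T.edgeFinset.card := by
    apply Finset.card_le_card_of_injOn (fun p => s(p.1, p.2))
    · rintro ⟨a, b⟩ hp
      rw [Finset.mem_coe, Finset.mem_sigma] at hp
      rw [Finset.mem_coe, mem_edgeFinset]
      exact (T.mem_neighborFinset a b).mp hp.2
    · rintro ⟨a, b⟩ hp ⟨a', b'⟩ hp' h
      simp only [Finset.mem_coe, Finset.mem_sigma, hAdef, mem_filter] at hp hp'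
      have hab : T.Adj a b := (T.mem_neighborFinset a b).mp hp.2
      have hab' : T.Adj a' b' := (T.mem_neighborFinset a' b').mp hp'.2
      rw [Sym2.eq_iff] at h
      rcases h with ⟨rfl, rfl⟩ | ⟨rfl, rfl⟩
      · rfl
      · exact absurd hp'.1.2 (by simpa [hp.1.2] using (hc _ _ hab).symm ∘ Eq.symm)
  have hE := hT.card_edgeFinset
  rw [hcard] at hE
  omega


lemma case1 {α : Type*} [Fintype α] [DecidableEq α] (T : SimpleGraph α) (k : ℕ) (hk : 0 < k)
    (hcard : Fintype.card α = 2 * k + 3)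
    (c : α → Bool) (hc : ∀ u v, T.Adj u v → c u ≠ c v)
    (hA : (univ.filter fun v => c v = true).card ≤ k)
    (hB : (univ.filter fun v => c v = false).card ≤ 2 * k + 2) :
    ContainsSub T (graphJoin (⊥ : SimpleGraph (Fin k)) (pathThreeGraph k)) := by
  classical
  have cardA : Fintype.card {v // c v = true} ≤ k := by
    rw [Fintype.card_subtype]; exact hA
  have cardB : Fintype.card {v // c v = false} ≤ 2 * k + 2 := by
    rw [Fintype.card_subtype]; exact hB
  obtain ⟨eA⟩ := Function.Embedding.nonempty_of_card_le (cardA.trans_eq (Fintype.card_fin k).symm)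
  obtain ⟨eB⟩ := Function.Embedding.nonempty_of_card_le
    (cardB.trans_eq (Fintype.card_fin (2 * k + 2)).symm)
  set f : α → Fin k ⊕ Fin (2 * k + 2) := fun v =>
    if h : c v = true then Sum.inl (eA ⟨v, h⟩)
    else Sum.inr (eB ⟨v, by simpa using h⟩) with hf
  have hfT : ∀ v (h : c v = true), f v = Sum.inl (eA ⟨v, h⟩) := fun v h => by
    rw [hf]; exact dif_pos h
  have hfF : ∀ v (h : c v = false), f v = Sum.inr (eB ⟨v, h⟩) := fun v h => by
    rw [hf]; exact dif_neg (by simp [h])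
  have hmap : ∀ u v, T.Adj u v → c u = true →
      (graphJoin (⊥ : SimpleGraph (Fin k)) (pathThreeGraph k)).Adj (f u) (f v) := by
    intro u v huv hu
    have hv : c v = false := by
      have := hc u v huv; revert this; rw [hu]; cases c v <;> simp
    rw [hfT u hu, hfF v hv]
    trivial
  have hrel : ∀ {u v : α}, T.Adj u v →
      (graphJoin (⊥ : SimpleGraph (Fin k)) (pathThreeGraph k)).Adj (f u) (f v) := by
    intro u v huv
    by_cases hu : c u = true
    · exact hmap u v huv hu
    · have hv : c v = true := by
        have := hc u v huv; revert this hu; cases c u <;> cases c v <;> simp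
      exact ((graphJoin _ _).adj_symm (hmap v u huv.symm hv))
  have hinj : Function.Injective f := by
    intro x y hxy
    by_cases hx : c x = true <;> by_cases hy : c y = true
    · rw [hfT x hx, hfT y hy] at hxy
      simpa using congrArg Subtype.val (eA.injective (Sum.inl_injective hxy))
    · rw [hfT x hx, hfF y (by simpa using hy)] at hxy; simp at hxy
    · rw [hfF x (by simpa using hx), hfT y hy] at hxy; simp at hxy
    · rw [hfF x (by simpa using hx), hfF y (by simpa using hy)] at hxy
      simpa using congrArg Subtype.val (eB.injective (Sum.inr_injective hxy))
  exact ⟨⟨f, hrel⟩, hinj⟩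


lemma case2 {α : Type*} [Fintype α] [DecidableEq α] (T : SimpleGraph α) [DecidableRel T.Adj]
    (hT : T.IsTree) (k : ℕ) (hk : 0 < k) (hcard : Fintype.card α = 2 * k + 3)
    (c : α → Bool) (hc : ∀ u v, T.Adj u v → c u ≠ c v)
    (hA : (univ.filter fun v => c v = true).card = k + 1)
    (a0 : α) (ha0 : c a0 = true) (hdeg : T.degree a0 ≤ 2) :
    ContainsSub T (graphJoin (⊥ : SimpleGraph (Fin k)) (pathThreeGraph k)) := by
  classical
  -- cardinality of the false class
  have hfe : (univ.filter fun v => ¬ c v = true) = (univ.filter fun v => c v = false) := by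
    ext x; simp
  have htot := Finset.card_filter_add_card_filter_not
    (s := (univ : Finset α)) (p := fun v => c v = true)
  rw [hfe, Finset.card_univ, hcard] at htot
  have hB : (univ.filter fun v => c v = false).card = k + 2 := by omega
  -- a0 has a neighbor
  have hmem : ∀ b, b ∈ T.neighborFinset a0 ↔ T.Adj a0 b := fun b => T.mem_neighborFinset a0 b
  have hNne : ∃ b, T.Adj a0 b := by
    obtain ⟨v, hv⟩ : ∃ v, v ≠ a0 := Fintype.exists_ne_of_one_lt_card (by omega) a0
    obtain ⟨w⟩ := hT.isConnected.preconnected a0 v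
    cases w with
    | nil => exact absurd rfl hv
    | cons h _ => exact ⟨_, h⟩
  obtain ⟨b1, hb1⟩ := hNne
  have hb1c : c b1 = false := by
    have := hc a0 b1 hb1; revert this; rw [ha0]; cases c b1 <;> simp
  have hNcard : (T.neighborFinset a0).card ≤ 2 := hdeg
  -- choose b2
  have hb2ex : ∃ b2, c b2 = false ∧ b2 ≠ b1 ∧ ∀ b, T.Adj a0 b → b = b1 ∨ b = b2 := by
    by_cases h2 : ∃ b ∈ T.neighborFinset a0, b ≠ b1
    · obtain ⟨b2, hb2N, hb2ne⟩ := h2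
      have hb2adj := (hmem b2).mp hb2N
      have hb2c : c b2 = false := by
        have := hc a0 b2 hb2adj; revert this; rw [ha0]; cases c b2 <;> simp
      refine ⟨b2, hb2c, hb2ne, ?_⟩
      intro b hb
      by_contra hcon
      push_neg at hcon
      have hsub : ({b1, b2, b} : Finset α) ⊆ T.neighborFinset a0 := by
        intro x hx
        simp only [Finset.mem_insert, Finset.mem_singleton] at hx
        rcases hx with rfl | rfl | rfl
        · exact (hmem x).mpr hb1
        · exact hb2N
        · exact (hmem x).mpr hb
      have hc3 : ({b1, b2, b} : Finset α).card = 3 := by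
        rw [Finset.card_insert_of_notMem (by simp [hb2ne.symm, hcon.1.symm]),
          Finset.card_insert_of_notMem (by simp [hcon.2.symm])]
        simp
      have := Finset.card_le_card hsub
      omega
    · push_neg at h2
      have hone : ((univ.filter fun v => c v = false).erase b1).Nonempty := by
        rw [← Finset.card_pos, Finset.card_erase_of_mem (by simp [hb1c]), hB]
        omega
      obtain ⟨b2, hb2⟩ := hone
      rw [Finset.mem_erase, mem_filter] at hb2
      refine ⟨b2, hb2.2.2, hb2.1, ?_⟩
      intro b hb
      exact Or.inl (h2 b ((hmem b).mpr hb))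
  obtain ⟨b2, hb2c, hb2ne, hNsub⟩ := hb2ex
  -- embeddings for the rest
  have cardA' : Fintype.card {v // c v = true ∧ v ≠ a0} = k := by
    rw [Fintype.card_subtype]
    have : (univ.filter fun v => c v = true ∧ v ≠ a0) =
        (univ.filter fun v => c v = true).erase a0 := by
      ext x; simp [Finset.mem_erase]; tauto
    rw [this, Finset.card_erase_of_mem (by simp [ha0]), hA]
    omega
  have cardR : Fintype.card {v // c v = false ∧ v ≠ b1 ∧ v ≠ b2} = k := by
    rw [Fintype.card_subtype]
    have : (univ.filter fun v => c v = false ∧ v ≠ b1 ∧ v ≠ b2) =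
        ((univ.filter fun v => c v = false).erase b2).erase b1 := by
      ext x; simp [Finset.mem_erase]; tauto
    have hm1 : b1 ∈ (univ.filter fun v => c v = false).erase b2 := by
      rw [Finset.mem_erase]
      exact ⟨Ne.symm hb2ne, by simp [hb1c]⟩
    rw [this, Finset.card_erase_of_mem hm1, Finset.card_erase_of_mem (by simp [hb2c]), hB]
    omega
  obtain ⟨eA⟩ := Function.Embedding.nonempty_of_card_le
    (le_of_eq (cardA'.trans (Fintype.card_fin k).symm))
  obtain ⟨eR⟩ : Nonempty ({v // c v = false ∧ v ≠ b1 ∧ v ≠ b2} ↪ Fin (2 * k - 1)) := by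
    apply Function.Embedding.nonempty_of_card_le
    rw [cardR, Fintype.card_fin]
    omega
  -- the map on the false class
  set g : {v // c v = false} → Fin (2 * k + 2) := fun b =>
    if h1 : b.1 = b1 then ⟨2 * k - 1, by omega⟩
    else if h2 : b.1 = b2 then ⟨2 * k + 1, by omega⟩
    else ⟨(eR ⟨b.1, b.2, h1, h2⟩).val, by have := (eR ⟨b.1, b.2, h1, h2⟩).isLt; omega⟩
    with hg
  have hgb1 : ∀ b : {v // c v = false}, b.1 = b1 → (g b).val = 2 * k - 1 := by
    intro b h; rw [hg]; simp only [dif_pos h]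
  have hgb2 : ∀ b : {v // c v = false}, b.1 ≠ b1 → b.1 = b2 → (g b).val = 2 * k + 1 := by
    intro b h1 h2; rw [hg]; simp only [dif_neg h1, dif_pos h2]
  have hgelse : ∀ (b : {v // c v = false}) (h1 : b.1 ≠ b1) (h2 : b.1 ≠ b2),
      (g b).val = (eR ⟨b.1, b.2, h1, h2⟩).val := by
    intro b h1 h2; rw [hg]; simp only [dif_neg h1, dif_neg h2]
  have hgne2k : ∀ b : {v // c v = false}, (g b).val ≠ 2 * k := by
    intro b
    by_cases h1 : b.1 = b1
    · rw [hgb1 b h1]; omega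
    · by_cases h2 : b.1 = b2
      · rw [hgb2 b h1 h2]; omega
      · rw [hgelse b h1 h2]; have := (eR ⟨b.1, b.2, h1, h2⟩).isLt; omega
  have ginj : Function.Injective g := by
    intro b b' heq
    have h := congrArg Fin.val heq
    apply Subtype.ext
    by_cases h1 : b.1 = b1
    · rw [hgb1 b h1] at h
      by_cases h1' : b'.1 = b1
      · rw [h1, h1']
      · by_cases h2' : b'.1 = b2
        · rw [hgb2 b' h1' h2'] at h; omega
        · rw [hgelse b' h1' h2'] at h; have := (eR ⟨b'.1, b'.2, h1', h2'⟩).isLt; omega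
    · by_cases h2 : b.1 = b2
      · rw [hgb2 b h1 h2] at h
        by_cases h1' : b'.1 = b1
        · rw [hgb1 b' h1'] at h; omega
        · by_cases h2' : b'.1 = b2
          · rw [h2, h2']
          · rw [hgelse b' h1' h2'] at h; have := (eR ⟨b'.1, b'.2, h1', h2'⟩).isLt; omega
      · rw [hgelse b h1 h2] at h
        by_cases h1' : b'.1 = b1
        · rw [hgb1 b' h1'] at h; have := (eR ⟨b.1, b.2, h1, h2⟩).isLt; omega
        · by_cases h2' : b'.1 = b2
          · rw [hgb2 b' h1' h2'] at h; have := (eR ⟨b.1, b.2, h1, h2⟩).isLt; omega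
          · rw [hgelse b' h1' h2'] at h
            have := eR.injective (Fin.ext h)
            exact Subtype.mk_eq_mk.mp this
  -- the embedding
  set f : α → Fin k ⊕ Fin (2 * k + 2) := fun v =>
    if hv : c v = true then
      (if ha : v = a0 then Sum.inr ⟨2 * k, by omega⟩ else Sum.inl (eA ⟨v, hv, ha⟩))
    else Sum.inr (g ⟨v, by simpa using hv⟩)
    with hf
  have hf0 : f a0 = Sum.inr ⟨2 * k, by omega⟩ := by
    rw [hf]; simp [ha0]
  have hfA : ∀ v (hv : c v = true) (hva : v ≠ a0), f v = Sum.inl (eA ⟨v, hv, hva⟩) := by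
    intro v hv hva; rw [hf]; simp only [dif_pos hv, dif_neg hva]
  have hfB : ∀ v (hv : c v = false), f v = Sum.inr (g ⟨v, hv⟩) := by
    intro v hv; rw [hf]; simp only [dif_neg (by simp [hv] : ¬ c v = true)]
  have key : ∀ u v, T.Adj u v → c u = true →
      (graphJoin (⊥ : SimpleGraph (Fin k)) (pathThreeGraph k)).Adj (f u) (f v) := by
    intro u v huv hcu
    have hcv : c v = false := by
      have := hc u v huv; revert this; rw [hcu]; cases c v <;> simp
    rw [hfB v hcv]
    by_cases hu0 : u = a0
    · subst hu0
      rw [hf0]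
      rcases hNsub v huv with rfl | rfl
      · refine ⟨?_, ?_⟩
        · intro hcontra
          have := congrArg Fin.val hcontra
          rw [hgb1 ⟨v, hcv⟩ rfl] at this
          simp at this; omega
        · right; left
          exact ⟨rfl, hgb1 ⟨v, hcv⟩ rfl⟩
      · by_cases hvb1 : v = b1
        · refine ⟨?_, ?_⟩
          · intro hcontra
            have := congrArg Fin.val hcontra
            rw [hgb1 ⟨v, hcv⟩ hvb1] at this
            simp at this; omega
          · right; left
            exact ⟨rfl, hgb1 ⟨v, hcv⟩ hvb1⟩
        · refine ⟨?_, ?_⟩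
          · intro hcontra
            have := congrArg Fin.val hcontra
            rw [hgb2 ⟨v, hcv⟩ hvb1 rfl] at this
            simp at this
          · right; right; left
            exact ⟨rfl, hgb2 ⟨v, hcv⟩ hvb1 rfl⟩
    · rw [hfA u hcu hu0]
      trivial
  have hrel : ∀ {u v : α}, T.Adj u v →
      (graphJoin (⊥ : SimpleGraph (Fin k)) (pathThreeGraph k)).Adj (f u) (f v) := by
    intro u v huv
    by_cases hu : c u = true
    · exact key u v huv hu
    · have hv : c v = true := by
        have := hc u v huv; revert this hu; cases c u <;> cases c v <;> simp
      exact (graphJoin _ _).adj_symm (key v u huv.symm hv)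
  have hinj : Function.Injective f := by
    intro x y hxy
    by_cases hx : c x = true <;> by_cases hy : c y = true
    · by_cases hx0 : x = a0 <;> by_cases hy0 : y = a0
      · rw [hx0, hy0]
      · rw [hx0, hf0, hfA y hy hy0] at hxy; simp at hxy
      · rw [hy0, hf0, hfA x hx hx0] at hxy; simp at hxy
      · rw [hfA x hx hx0, hfA y hy hy0] at hxy
        simpa using congrArg Subtype.val (eA.injective (Sum.inl_injective hxy))
    · have hyc : c y = false := by simpa using hy
      rw [hfB y hyc] at hxy
      by_cases hx0 : x = a0
      · rw [hx0, hf0] at hxy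
        exact absurd (congrArg Fin.val (Sum.inr_injective hxy)).symm (hgne2k ⟨y, hyc⟩)
      · rw [hfA x hx hx0] at hxy; simp at hxy
    · have hxc : c x = false := by simpa using hx
      rw [hfB x hxc] at hxy
      by_cases hy0 : y = a0
      · rw [hy0, hf0] at hxy
        exact absurd (congrArg Fin.val (Sum.inr_injective hxy)) (hgne2k ⟨x, hxc⟩)
      · rw [hfA y hy hy0] at hxy; simp at hxy
    · have hxc : c x = false := by simpa using hx
      have hyc : c y = false := by simpa using hy
      rw [hfB x hxc, hfB y hyc] at hxy
      exact congrArg Subtype.val (ginj (Sum.inr_injective hxy))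
  exact ⟨⟨f, hrel⟩, hinj⟩


theorem stmt_8 (k : ℕ) (hk : 0 < k) {α : Type*} [Fintype α]
    (T : SimpleGraph α) (hT : T.IsTree) (hcard : Fintype.card α = 2 * k + 3) :
    ContainsSub T (graphJoin (⊥ : SimpleGraph (Fin k)) (pathThreeGraph k)) := by
  classical
  haveI : DecidableRel T.Adj := Classical.decRel _
  haveI hne : Nonempty α := Fintype.card_pos_iff.mp (by omega)
  obtain ⟨c, hc⟩ := tree_two_coloring T hT
  obtain ⟨u0, v0, huv0⟩ : ∃ u v, T.Adj u v := by
    obtain ⟨v, hv⟩ : ∃ v : α, v ≠ Classical.arbitrary α :=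
      Fintype.exists_ne_of_one_lt_card (by omega) _
    obtain ⟨w⟩ := hT.isConnected.preconnected (Classical.arbitrary α) v
    cases w with
    | nil => exact absurd rfl hv
    | cons h _ => exact ⟨_, _, h⟩
  have hfe : (univ.filter fun v => ¬ c v = true) = (univ.filter fun v => c v = false) := by
    ext x; simp
  have htot := Finset.card_filter_add_card_filter_not
    (s := (univ : Finset α)) (p := fun v => c v = true)
  rw [hfe, Finset.card_univ, hcard] at htot
  have honeT : 1 ≤ (univ.filter fun v => c v = true).card := by
    have hx : ∃ x, c x = true := by
      by_cases h : c u0 = true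
      · exact ⟨u0, h⟩
      · refine ⟨v0, ?_⟩
        have := hc u0 v0 huv0; revert this h; cases c u0 <;> cases c v0 <;> simp
    obtain ⟨x, hx⟩ := hx
    exact Finset.card_pos.mpr ⟨x, by simp [hx]⟩
  have honeF : 1 ≤ (univ.filter fun v => c v = false).card := by
    have hx : ∃ x, c x = false := by
      by_cases h : c u0 = false
      · exact ⟨u0, h⟩
      · refine ⟨v0, ?_⟩
        have := hc u0 v0 huv0; revert this h; cases c u0 <;> cases c v0 <;> simp
    obtain ⟨x, hx⟩ := hx
    exact Finset.card_pos.mpr ⟨x, by simp [hx]⟩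
  set c' : α → Bool := fun v => !c v with hc'def
  have hc' : ∀ u v, T.Adj u v → c' u ≠ c' v := by
    intro u v h hcon
    exact hc u v h (Bool.not_inj hcon)
  have hfilT' : (univ.filter fun v => c' v = true) = (univ.filter fun v => c v = false) := by
    ext x; simp [hc'def]
  have hfilF' : (univ.filter fun v => c' v = false) = (univ.filter fun v => c v = true) := by
    ext x; simp [hc'def]
  by_cases hA : (univ.filter fun v => c v = true).card ≤ k
  · exact case1 T k hk hcard c hc hA (by omega)
  · by_cases hBc : (univ.filter fun v => c v = false).card ≤ k
    · exact case1 T k hk hcard c' hc' (by rw [hfilT']; exact hBc) (by rw [hfilF']; omega)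
    · rcases (by omega : (univ.filter fun v => c v = true).card = k + 1 ∨
        (univ.filter fun v => c v = false).card = k + 1) with h | h
      · obtain ⟨a0, ha0, hdeg⟩ := exists_small_degree T hT k hcard c hc h
        exact case2 T hT k hk hcard c hc h a0 ha0 hdeg
      · have h' : (univ.filter fun v => c' v = true).card = k + 1 := by rw [hfilT']; exact h
        obtain ⟨a0, ha0, hdeg⟩ := exists_small_degree T hT k hcard c' hc' h'
        exact case2 T hT k hk hcard c' hc' h' a0 ha0 hdeg
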